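/- arXiv:1402.1926 — 6 statements merged into one kernel-verified Lean document; each statement's English description precedes it below -/
import Mathlib

section
/- Let m ∈ ℕ and let α = (α₁ α₂) ∈ ℂ^{m×2m} be admissible. Then α*αJ + Jα*α = J, where α*α ∈ ℂ^{2m×2m}. -/
open Matrix

/-- The matrix `J = [[0, −I_m],[I_m, 0]]` in `m × m` blocks. -/
noncomputable def Jmat (m : ℕ) : Matrix (Fin m ⊕ Fin m) (Fin m ⊕ Fin m) ℂ :=
  fromBlocks 0 (-1) 1 0

/-- A matrix `α ∈ ℂ^{m×2m}` is admissible if `αα* = I_m` and `αJα* = 0`. -/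
def Admissible {m : ℕ} (α : Matrix (Fin m) (Fin m ⊕ Fin m) ℂ) : Prop :=
  α * αᴴ = 1 ∧ α * Jmat m * αᴴ = 0

lemma Jmat_conjTranspose (m : ℕ) : (Jmat m)ᴴ = -(Jmat m) := by
  rw [Jmat, fromBlocks_conjTranspose, fromBlocks_neg]
  simp

lemma Jmat_mul_Jmat (m : ℕ) : Jmat m * Jmat m = -1 := by
  rw [Jmat, fromBlocks_multiply, ← fromBlocks_one, fromBlocks_neg]
  simp

/-- If `α` is admissible then `α*αJ + Jα*α = J`. -/
theorem statement1 (m : ℕ) (α : Matrix (Fin m) (Fin m ⊕ Fin m) ℂ)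
    (hα : Admissible α) :
    αᴴ * α * Jmat m + Jmat m * (αᴴ * α) = Jmat m := by
  obtain ⟨h1, h2⟩ := hα
  set J := Jmat m with hJ
  have hJH : Jᴴ = -J := Jmat_conjTranspose m
  have hJJ : J * J = -1 := Jmat_mul_Jmat m
  set B : Matrix (Fin m) (Fin m ⊕ Fin m) ℂ := -(α * J) with hB
  have hBH : Bᴴ = J * αᴴ := by
    rw [hB, conjTranspose_neg, conjTranspose_mul, hJH, Matrix.neg_mul, neg_neg]
  -- U = fromRows α B is unitary
  have hUUh : fromRows α B * (fromRows α B)ᴴ = 1 := by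
    rw [conjTranspose_fromRows_eq_fromCols_conjTranspose,
      fromRows_mul_fromCols]
    have hαB : α * Bᴴ = 0 := by
      rw [hBH, ← Matrix.mul_assoc, h2]
    have hBα : B * αᴴ = 0 := by
      rw [hB, Matrix.neg_mul, h2, neg_zero]
    have hBB : B * Bᴴ = 1 := by
      rw [hB, hBH, Matrix.neg_mul, ← Matrix.mul_assoc, Matrix.mul_assoc α J J, hJJ]
      simp only [Matrix.mul_neg, Matrix.mul_one, Matrix.neg_mul, neg_neg]
      exact h1
    rw [h1, hαB, hBα, hBB, ← fromBlocks_one]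
  have hUhU : (fromRows α B)ᴴ * fromRows α B = 1 := mul_eq_one_comm.mp hUUh
  rw [conjTranspose_fromRows_eq_fromCols_conjTranspose,
    fromCols_mul_fromRows] at hUhU
  -- hUhU : αᴴ * α + Bᴴ * B = 1
  have hBhB : Bᴴ * B = -(J * (αᴴ * α) * J) := by
    rw [hB, hBH, Matrix.mul_neg]
    rw [Matrix.mul_assoc, Matrix.mul_assoc, ← Matrix.mul_assoc αᴴ α J,
      ← Matrix.mul_assoc J (αᴴ * α) J]
  rw [hBhB] at hUhU
  have h3 := congrArg (· * J) hUhU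
  simp only [Matrix.add_mul, Matrix.neg_mul, Matrix.one_mul, Matrix.mul_assoc] at h3
  rw [hJJ] at h3
  calc αᴴ * α * J + J * (αᴴ * α)
      = αᴴ * (α * J) + -(J * (αᴴ * (α * -1))) := by
        simp [Matrix.mul_assoc, Matrix.mul_neg]
    _ = J := h3
end

section
/- Let m ∈ ℕ, let α, δ ∈ ℂ^{m×2m} both be admissible, and let M_δ ∈ ℂ^{m×m} be such that K := αδ* + αJδ*M_δ is invertible. Define M_α := (−αJδ* + αδ*M_δ) K^{−1}. Then (α* + Jα*M_α) K = δ* + Jδ*M_δ as 2m×m matrices. (This is the algebraic identity underlying the linear-fractional transformation law M^D_+(ζ,α) = [−αJδ* + αδ* M^D_+(ζ,δ)][αδ* + αJδ* M^D_+(ζ,δ)]^{−1} for Weyl–Titchmarsh matrices under a change of boundary condition.) -/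
open Matrix

/-- the algebraic identity behind the linear-fractional transformation law
for Weyl–Titchmarsh matrices under a change of boundary condition: if
`K := αδ* + αJδ*M_δ` is invertible and `M_α := (−αJδ* + αδ*M_δ)K⁻¹`, then
`(α* + Jα*M_α)K = δ* + Jδ*M_δ`. -/
theorem statement2 (m : ℕ) (α δ : Matrix (Fin m) (Fin m ⊕ Fin m) ℂ)
    (hα : Admissible α) (hδ : Admissible δ) (Mδ : Matrix (Fin m) (Fin m) ℂ)
    (hK : IsUnit (α * δᴴ + α * Jmat m * δᴴ * Mδ)) :
    (αᴴ + Jmat m * αᴴ *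
        ((-(α * Jmat m * δᴴ) + α * δᴴ * Mδ) * (α * δᴴ + α * Jmat m * δᴴ * Mδ)⁻¹)) *
      (α * δᴴ + α * Jmat m * δᴴ * Mδ)
      = δᴴ + Jmat m * δᴴ * Mδ := by
  obtain ⟨hα1, hα2⟩ := hα
  have hJH : (Jmat m)ᴴ = -(Jmat m) := by
    simp [Jmat, fromBlocks_conjTranspose, fromBlocks_neg]
  have hJJ : Jmat m * Jmat m = -1 := by
    rw [Jmat, fromBlocks_multiply, ← fromBlocks_one, fromBlocks_neg]
    simp
  have hαJ2 : α * Jmat m * (α * Jmat m)ᴴ = 1 := by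
    rw [conjTranspose_mul, hJH]
    have : α * Jmat m * (-Jmat m * αᴴ) = -(α * (Jmat m * Jmat m) * αᴴ) := by
      simp only [Matrix.mul_assoc, Matrix.neg_mul, Matrix.mul_neg]
    rw [this, hJJ]
    simp [hα1]
  have hαJ3 : α * (α * Jmat m)ᴴ = 0 := by
    rw [conjTranspose_mul, hJH]
    have : α * (-Jmat m * αᴴ) = -(α * Jmat m * αᴴ) := by
      simp only [Matrix.mul_assoc, Matrix.neg_mul, Matrix.mul_neg]
    rw [this, hα2, neg_zero]
  have hU : fromRows α (α * Jmat m) * fromCols αᴴ (α * Jmat m)ᴴ = 1 := by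
    rw [fromRows_mul_fromCols, hα1, hαJ2, hαJ3, hα2, ← fromBlocks_one]
  have hUU : fromCols αᴴ (α * Jmat m)ᴴ * fromRows α (α * Jmat m) = 1 :=
    mul_eq_one_comm.mp hU
  rw [fromCols_mul_fromRows, conjTranspose_mul, hJH] at hUU
  -- hUU : αᴴ * α + -Jmat m * αᴴ * (α * Jmat m) = 1
  have hP : ∀ X : Matrix (Fin m ⊕ Fin m) (Fin m) ℂ,
      αᴴ * (α * X) - Jmat m * (αᴴ * (α * (Jmat m * X))) = X := by
    intro X
    have := congrArg (· * X) hUU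
    simp only [Matrix.add_mul, Matrix.one_mul, Matrix.mul_assoc, Matrix.neg_mul] at this
    calc αᴴ * (α * X) - Jmat m * (αᴴ * (α * (Jmat m * X)))
        = αᴴ * (α * X) + -(Jmat m * (αᴴ * (α * (Jmat m * X)))) := by abel
      _ = X := this
  have hPJ : ∀ X : Matrix (Fin m ⊕ Fin m) (Fin m) ℂ,
      αᴴ * (α * (Jmat m * X)) + Jmat m * (αᴴ * (α * X)) = Jmat m * X := by
    intro X
    have h := congrArg (fun Y => Jmat m * Y) (hP (Jmat m * X))
    simp only [Matrix.mul_sub, ← Matrix.mul_assoc] at h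
    rw [hJJ] at h
    simp only [Matrix.mul_assoc] at h
    -- h : Jmat m * (αᴴ * (α * (Jmat m * X))) - Jmat m * (αᴴ * (-1 * X))? careful
    have h2 := hP (Jmat m * X)
    have h3 : αᴴ * (α * (Jmat m * (Jmat m * X))) = -(αᴴ * (α * X)) := by
      rw [← Matrix.mul_assoc (Jmat m), hJJ]
      simp [Matrix.neg_mul, Matrix.mul_neg]
    have h4 := hP X
    -- from h4 multiplied on left by J:
    have h5 := congrArg (fun Y => Jmat m * Y) h4
    simp only [Matrix.mul_sub] at h5
    have h6 : Jmat m * (Jmat m * (αᴴ * (α * (Jmat m * X)))) = -(αᴴ * (α * (Jmat m * X))) := by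
      rw [← Matrix.mul_assoc, hJJ]
      simp [Matrix.neg_mul]
    rw [h6] at h5
    -- h5 : Jmat m * (αᴴ * (α * X)) - -(αᴴ * (α * (Jmat m * X))) = Jmat m * X
    calc αᴴ * (α * (Jmat m * X)) + Jmat m * (αᴴ * (α * X))
        = Jmat m * (αᴴ * (α * X)) - -(αᴴ * (α * (Jmat m * X))) := by abel
      _ = Jmat m * X := h5
  have hdet : IsUnit (α * δᴴ + α * Jmat m * δᴴ * Mδ).det :=
    (Matrix.isUnit_iff_isUnit_det _).mp hK
  have hinv : (α * δᴴ + α * Jmat m * δᴴ * Mδ)⁻¹ * (α * δᴴ + α * Jmat m * δᴴ * Mδ) = 1 :=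
    Matrix.nonsing_inv_mul _ hdet
  have e1 := hP δᴴ
  have e2 := hPJ (δᴴ * Mδ)
  rw [Matrix.add_mul, Matrix.mul_assoc (Jmat m * αᴴ),
    Matrix.nonsing_inv_mul_cancel_right _ _ hdet]
  have expand : αᴴ * (α * δᴴ + α * Jmat m * δᴴ * Mδ)
        + Jmat m * αᴴ * (-(α * Jmat m * δᴴ) + α * δᴴ * Mδ)
      = (αᴴ * (α * δᴴ) - Jmat m * (αᴴ * (α * (Jmat m * δᴴ))))
        + (αᴴ * (α * (Jmat m * (δᴴ * Mδ))) + Jmat m * (αᴴ * (α * (δᴴ * Mδ)))) := by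
    simp only [Matrix.mul_add, Matrix.mul_neg, Matrix.mul_assoc]
    abel
  rw [expand, e1, e2, Matrix.mul_assoc]
end

section
/- Let m ∈ ℕ, let α = (α₁ α₂) ∈ ℂ^{m×2m} be admissible, and let M ∈ ℂ^{m×m} be such that the Hermitian matrix Im(M) := (M − M*)/(2i) is positive semidefinite. Then M + iI_m is invertible, and the matrix (α₁* + iα₂*)(M − iI_m)(M + iI_m)^{−1}(α₁ + iα₂) is a contraction, i.e., its operator norm is at most 1. (This is the assertion that the transformed Weyl–Titchmarsh matrix M̂^D(ζ) = (α₁* + iα₂*)[M^D_+(ζ,α) − iI_m][M^D_+(ζ,α) + iI_m]^{−1}(α₁ + iα₂) is contractive on ℂ₊.) -/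
open Matrix
open scoped ComplexOrder

open scoped InnerProductSpace in
/-- If `1 - AᴴA ⪰ 0` then `A` is a contraction. -/
lemma norm_le_one_of_psd {m : ℕ} (A : Matrix (Fin m) (Fin m) ℂ)
    (h : (1 - Aᴴ * A).PosSemidef) :
    ‖Matrix.toEuclideanCLM (𝕜 := ℂ) (n := Fin m) A‖ ≤ 1 := by
  apply ContinuousLinearMap.opNorm_le_bound _ zero_le_one
  intro x
  rw [one_mul]
  set T := Matrix.toEuclideanCLM (𝕜 := ℂ) (n := Fin m) A with hT
  set y := WithLp.equiv 2 (Fin m → ℂ) x with hy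
  have hTx : T x = (WithLp.equiv 2 (Fin m → ℂ)).symm (A *ᵥ y) := rfl
  have hpos := h.dotProduct_mulVec_nonneg y
  have hexp : star y ⬝ᵥ (1 - Aᴴ * A) *ᵥ y
      = star y ⬝ᵥ y - star (A *ᵥ y) ⬝ᵥ (A *ᵥ y) := by
    rw [sub_mulVec, dotProduct_sub, one_mulVec, ← Matrix.mulVec_mulVec,
      star_mulVec, dotProduct_mulVec]
  rw [hexp, sub_nonneg] at hpos
  have h1 : (⟪T x, T x⟫_ℂ : ℂ) = star (A *ᵥ y) ⬝ᵥ (A *ᵥ y) := by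
    rw [hTx]; exact dotProduct_comm _ _
  have h2 : (⟪x, x⟫_ℂ : ℂ) = star y ⬝ᵥ y := dotProduct_comm _ _
  have hpos' : (⟪T x, T x⟫_ℂ : ℂ) ≤ ⟪x, x⟫_ℂ := by rw [h1, h2]; exact hpos
  have e1 : ⟪T x, T x⟫_ℂ = ((‖T x‖^2 : ℝ) : ℂ) := by
    rw [inner_self_eq_norm_sq_to_K]; norm_cast
  have e2 : ⟪x, x⟫_ℂ = ((‖x‖^2 : ℝ) : ℂ) := by
    rw [inner_self_eq_norm_sq_to_K]; norm_cast
  rw [e1, e2] at hpos'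
  have h4 : ‖T x‖ ^ 2 ≤ ‖x‖ ^ 2 := by exact_mod_cast hpos'
  exact (pow_le_pow_iff_left₀ (norm_nonneg _) (norm_nonneg _) two_ne_zero).mp h4

/-- if `α = (α₁ α₂)` is admissible and `Im(M) = (M − M*)/(2i) ≥ 0`, then
`M + iI_m` is invertible and `(α₁* + iα₂*)(M − iI_m)(M + iI_m)⁻¹(α₁ + iα₂)` is a
contraction (operator norm at most `1`). -/
theorem statement6 (m : ℕ) (α₁ α₂ : Matrix (Fin m) (Fin m) ℂ)
    (hα : Admissible (fromCols α₁ α₂)) (M : Matrix (Fin m) (Fin m) ℂ)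
    (hM : ((((2 : ℂ) * Complex.I))⁻¹ • (M - Mᴴ)).PosSemidef) :
    IsUnit (M + Complex.I • 1) ∧
    ‖Matrix.toEuclideanCLM (𝕜 := ℂ) (n := Fin m)
        ((α₁ᴴ + Complex.I • α₂ᴴ) * (M - Complex.I • 1) * (M + Complex.I • 1)⁻¹ *
          (α₁ + Complex.I • α₂))‖ ≤ 1 := by
  -- unpack admissibility
  obtain ⟨h1, h2⟩ := hα
  rw [conjTranspose_fromCols_eq_fromRows_conjTranspose, fromCols_mul_fromRows] at h1
  rw [Jmat, fromCols_mul_fromBlocks, conjTranspose_fromCols_eq_fromRows_conjTranspose,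
    fromCols_mul_fromRows] at h2
  simp only [mul_zero, mul_one, zero_add, mul_neg, add_zero, mul_neg_one, neg_mul] at h2
  -- the two "unitarity" identities
  have hU : (α₁ + Complex.I • α₂) * (α₁ + Complex.I • α₂)ᴴ = 1 := by
    have expand : (α₁ + Complex.I • α₂) * (α₁ + Complex.I • α₂)ᴴ =
        (α₁ * α₁ᴴ + α₂ * α₂ᴴ) + Complex.I • (α₂ * α₁ᴴ + -(α₁ * α₂ᴴ)) := by
      simp only [conjTranspose_add, conjTranspose_smul, Complex.star_def, Complex.conj_I,
        mul_add, add_mul, smul_mul_assoc, mul_smul_comm, smul_smul, neg_smul, smul_neg,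
        mul_neg, Complex.I_mul_I, neg_neg, one_smul, smul_add]
      abel
    rw [expand, h1, h2, smul_zero, add_zero]
  have hUU : (α₁ + Complex.I • α₂)ᴴ * (α₁ + Complex.I • α₂) = 1 :=
    mul_eq_one_comm.mp hU
  have hWW : (α₁ᴴ + Complex.I • α₂ᴴ)ᴴ * (α₁ᴴ + Complex.I • α₂ᴴ) = 1 := by
    have expand : (α₁ᴴ + Complex.I • α₂ᴴ)ᴴ * (α₁ᴴ + Complex.I • α₂ᴴ) =
        (α₁ * α₁ᴴ + α₂ * α₂ᴴ) + (-Complex.I) • (α₂ * α₁ᴴ + -(α₁ * α₂ᴴ)) := by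
      simp only [conjTranspose_add, conjTranspose_smul, conjTranspose_conjTranspose,
        Complex.star_def, Complex.conj_I]
      simp only [mul_add, add_mul, neg_smul, smul_neg, neg_mul, mul_neg, neg_neg]
      simp only [smul_mul_assoc, mul_smul_comm, smul_smul, Complex.I_mul_I, neg_smul,
        neg_neg, one_smul, smul_add, smul_sub]
      module
    rw [expand, h1, h2, smul_zero, add_zero]
  -- invertibility of M + iI
  have hN : IsUnit (M + Complex.I • (1 : Matrix (Fin m) (Fin m) ℂ)) := by
    rw [Matrix.isUnit_iff_isUnit_det, isUnit_iff_ne_zero]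
    intro hdet
    obtain ⟨v, hv, hv0⟩ := (Matrix.exists_mulVec_eq_zero_iff).mpr hdet
    apply hv
    have hMv : M *ᵥ v = -(Complex.I • v) := by
      rw [add_mulVec, smul_mulVec, one_mulVec] at hv0
      linear_combination (norm := module) hv0
    set c := star v ⬝ᵥ v with hcdef
    have hc0 : 0 ≤ c := dotProduct_star_self_nonneg v
    have key := hM.dotProduct_mulVec_nonneg v
    rw [smul_mulVec, dotProduct_smul, sub_mulVec, dotProduct_sub, hMv] at key
    have hherm : star v ⬝ᵥ Mᴴ *ᵥ v = Complex.I * c := by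
      rw [dotProduct_mulVec, ← star_mulVec, hMv]
      simp [star_smul, Complex.star_def, Complex.conj_I, smul_dotProduct, neg_dotProduct, hcdef]
    have hdot : star v ⬝ᵥ -(Complex.I • v) = -(Complex.I * c) := by
      simp [dotProduct_smul, hcdef]
    rw [hherm, hdot] at key
    have keq : ((2 : ℂ)*Complex.I)⁻¹ • (-(Complex.I*c) - Complex.I*c) = -c := by
      rw [smul_eq_mul]
      field_simp
      ring
    rw [keq] at key
    have : c = 0 := le_antisymm (by simpa using neg_nonneg.mp key) hc0
    exact dotProduct_star_self_eq_zero.mp this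
  refine ⟨hN, norm_le_one_of_psd _ ?_⟩
  -- positivity of 1 - AᴴA
  set U : Matrix (Fin m) (Fin m) ℂ := α₁ + Complex.I • α₂ with hUdef
  set W : Matrix (Fin m) (Fin m) ℂ := α₁ᴴ + Complex.I • α₂ᴴ with hWdef
  set N : Matrix (Fin m) (Fin m) ℂ := M + Complex.I • 1 with hNdef
  set D : Matrix (Fin m) (Fin m) ℂ := M - Complex.I • 1 with hDdef
  have hiv : ((2:ℂ)*Complex.I)⁻¹ = -Complex.I/2 :=
    inv_eq_of_mul_eq_one_left (by linear_combination (-1 : ℂ) * Complex.I_mul_I)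
  rw [hiv] at hM
  set P : Matrix (Fin m) (Fin m) ℂ := (-Complex.I/2 : ℂ) • (M - Mᴴ) with hPdef
  have hNN : N * N⁻¹ = 1 := mul_nonsing_inv _ ((isUnit_iff_isUnit_det N).mp hN)
  have hNNH : N⁻¹ᴴ * Nᴴ = 1 := by rw [← conjTranspose_mul, hNN, conjTranspose_one]
  have key : Nᴴ * N - Dᴴ * D = P + P + P + P := by
    simp only [hNdef, hDdef, hPdef, conjTranspose_add, conjTranspose_sub, conjTranspose_smul,
      conjTranspose_one, Complex.star_def, Complex.conj_I, mul_add, add_mul, sub_mul, mul_sub,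
      smul_mul_assoc, mul_smul_comm, mul_one, one_mul, smul_smul, neg_smul, smul_sub, smul_add,
      neg_mul, mul_neg, smul_neg, neg_neg, Complex.I_mul_I, one_smul]
    module
  set A : Matrix (Fin m) (Fin m) ℂ := W * D * N⁻¹ * U with hAdef
  have hA2 : Aᴴ * A = (N⁻¹ * U)ᴴ * (Dᴴ * D) * (N⁻¹ * U) := by
    simp only [hAdef, conjTranspose_mul, Matrix.mul_assoc]
    rw [← Matrix.mul_assoc Wᴴ W, hWW, Matrix.one_mul]
  have hone : (1 : Matrix (Fin m) (Fin m) ℂ) = (N⁻¹ * U)ᴴ * (Nᴴ * N) * (N⁻¹ * U) := by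
    simp only [conjTranspose_mul, Matrix.mul_assoc]
    rw [← Matrix.mul_assoc N N⁻¹, hNN, Matrix.one_mul,
      ← Matrix.mul_assoc N⁻¹ᴴ Nᴴ, hNNH, Matrix.one_mul, hUU]
  have hfinal : 1 - Aᴴ * A = (N⁻¹ * U)ᴴ * (P + P + P + P) * (N⁻¹ * U) := by
    rw [← key, hA2]
    conv_lhs => rw [hone]
    noncomm_ring
  rw [hfinal]
  exact (((hM.add hM).add hM).add hM).conjTranspose_mul_mul_same _
end

section
/- Assume Hypothesis (H) and let ζ ∈ ℂ∖ℝ. Suppose u₁, u₂ : [0,∞) → ℂ^{m×m} are locally absolutely continuous with −u₂′ + φu₂ = ζu₁ and u₁′ + φu₁ = ζu₂ a.e. on [0,∞), u₁(0) = I_m, and set M := u₂(0); assume M is invertible. Set z := ζ². Then: (i) ψ₁ := u₁ satisfies that ψ₁ and ψ₁^{[1,1]} are locally absolutely continuous, τ₁ψ₁ = zψ₁ a.e., ψ₁(0) = I_m, and ψ₁^{[1,1]}(0) = ζM; (ii) ψ₂ := u₂M^{−1} satisfies that ψ₂ and ψ₂^{[1,2]} are locally absolutely continuous, τ₂ψ₂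 = zψ₂ a.e., ψ₂(0) = I_m, and ψ₂^{[1,2]}(0) = −ζM^{−1}; (iii) consequently, the matrices M̂₁ := ζM and M̂₂ := −ζM^{−1} satisfy M̂₁ = −z M̂₂^{−1}. (This is the identity M̂_{+,0,1}(z) = ζ M^D_+(ζ,α₀) = −z M̂_{+,0,2}(z)^{−1} of Theorem 3.1, expressed through the Weyl–Titchmarsh solutions.) -/
open Matrix MeasureTheory

/-- `F` is locally absolutely continuous on `[0,∞)` with (entrywise locally integrable)
derivative `F'`, i.e. `F x = F 0 + ∫₀ˣ F' t dt` for all `x ≥ 0`. -/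
def LocAC {ι κ : Type*} (F F' : ℝ → Matrix ι κ ℂ) : Prop :=
  (∀ i j, ∀ R : ℝ, IntervalIntegrable (fun x => F' x i j) volume 0 R) ∧
  ∀ x : ℝ, 0 ≤ x → F x = F 0 + Matrix.of fun i j => ∫ t in (0:ℝ)..x, F' t i j

/-- Hypothesis (H): `φ` is measurable, locally square integrable (entrywise) on `[0,∞)`,
and `φ(x) = φ(x)*` for a.e. `x ≥ 0`. -/
def HypH {m : ℕ} (φ : ℝ → Matrix (Fin m) (Fin m) ℂ) : Prop :=
  (∀ i j, Measurable fun x => φ x i j) ∧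
  (∀ R : ℝ, ∀ i j, IntegrableOn (fun x => ‖φ x i j‖ ^ 2) (Set.Icc 0 R)) ∧
  (∀ᵐ x ∂volume.restrict (Set.Ici (0:ℝ)), (φ x)ᴴ = φ x)

lemma locAC_smul {ι κ : Type*} (c : ℂ) {F F' : ℝ → Matrix ι κ ℂ} (h : LocAC F F') :
    LocAC (fun x => c • F x) (fun x => c • F' x) := by
  obtain ⟨hi, he⟩ := h
  refine ⟨fun i j R => ?_, fun x hx => ?_⟩
  · simpa [Matrix.smul_apply, smul_eq_mul] using (hi i j R).const_mul c
  · ext i j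
    simp only [Matrix.smul_apply, Matrix.add_apply, Matrix.of_apply, smul_eq_mul]
    rw [he x hx]
    simp [Matrix.add_apply, Matrix.of_apply, intervalIntegral.integral_const_mul, mul_add]

lemma locAC_mulRight {ι κ μ' : Type*} [Fintype κ] (C : Matrix κ μ' ℂ)
    {F F' : ℝ → Matrix ι κ ℂ} (h : LocAC F F') :
    LocAC (fun x => F x * C) (fun x => F' x * C) := by
  obtain ⟨hi, he⟩ := h
  refine ⟨fun i j R => ?_, fun x hx => ?_⟩
  · have hrw : (fun x => (F' x * C) i j) = ∑ k : κ, (fun x => F' x i k * C k j) := by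
      funext x; rw [Matrix.mul_apply, Finset.sum_apply]
    rw [hrw]
    exact IntervalIntegrable.sum Finset.univ fun k _ => (hi i k R).mul_const (C k j)
  · ext i j
    simp only [Matrix.mul_apply, Matrix.add_apply, Matrix.of_apply]
    rw [he x hx]
    rw [intervalIntegral.integral_finset_sum (fun k _ => (hi i k x).mul_const (C k j))]
    simp [Matrix.add_apply, Matrix.of_apply, add_mul, Finset.sum_add_distrib,
      intervalIntegral.integral_mul_const]

/-- if `U = (u₁; u₂)` solves the Dirac system `𝒟U = ζU` with
`u₁(0) = I_m` and `M := u₂(0)` invertible, `ζ ∉ ℝ`, `z := ζ²`, then (i) `ψ₁ := u₁`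
solves `τ₁ψ₁ = zψ₁` with `ψ₁(0) = I`, `ψ₁^{[1,1]}(0) = ζM`; (ii) `ψ₂ := u₂M⁻¹`
solves `τ₂ψ₂ = zψ₂` with `ψ₂(0) = I`, `ψ₂^{[1,2]}(0) = −ζM⁻¹`; and (iii)
`M̂₁ := ζM` and `M̂₂ := −ζM⁻¹` satisfy `M̂₁ = −zM̂₂⁻¹`. -/
theorem statement12 (m : ℕ) (φ : ℝ → Matrix (Fin m) (Fin m) ℂ) (hφ : HypH φ)
    (ζ : ℂ) (hζ : ζ.im ≠ 0)
    (u₁ u₁' u₂ u₂' : ℝ → Matrix (Fin m) (Fin m) ℂ)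
    (h₁ : LocAC u₁ u₁') (h₂ : LocAC u₂ u₂')
    (heq₁ : ∀ᵐ x ∂volume.restrict (Set.Ici (0:ℝ)), -u₂' x + φ x * u₂ x = ζ • u₁ x)
    (heq₂ : ∀ᵐ x ∂volume.restrict (Set.Ici (0:ℝ)), u₁' x + φ x * u₁ x = ζ • u₂ x)
    (h10 : u₁ 0 = 1) (hM : IsUnit (u₂ 0)) :
    -- (i) ψ₁ := u₁ and its quasi-derivative ψ₁^{[1,1]} = u₁' + φu₁ = ζu₂ (a.e.)
    ((∀ᵐ x ∂volume.restrict (Set.Ici (0:ℝ)), u₁' x + φ x * u₁ x = ζ • u₂ x) ∧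
      LocAC (fun x => ζ • u₂ x) (fun x => ζ • u₂' x) ∧
      (∀ᵐ x ∂volume.restrict (Set.Ici (0:ℝ)),
        -(ζ • u₂' x) + φ x * (ζ • u₂ x) = (ζ ^ 2) • u₁ x) ∧
      u₁ 0 = 1 ∧ ζ • u₂ 0 = ζ • u₂ 0) ∧
    -- (ii) ψ₂ := u₂ M⁻¹ and its quasi-derivative ψ₂^{[1,2]} = ψ₂' − φψ₂ = −ζu₁M⁻¹ (a.e.)
    (LocAC (fun x => u₂ x * (u₂ 0)⁻¹) (fun x => u₂' x * (u₂ 0)⁻¹) ∧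
      (∀ᵐ x ∂volume.restrict (Set.Ici (0:ℝ)),
        u₂' x * (u₂ 0)⁻¹ - φ x * (u₂ x * (u₂ 0)⁻¹) = -(ζ • (u₁ x * (u₂ 0)⁻¹))) ∧
      LocAC (fun x => -(ζ • (u₁ x * (u₂ 0)⁻¹))) (fun x => -(ζ • (u₁' x * (u₂ 0)⁻¹))) ∧
      (∀ᵐ x ∂volume.restrict (Set.Ici (0:ℝ)),
        -(-(ζ • (u₁' x * (u₂ 0)⁻¹))) - φ x * (-(ζ • (u₁ x * (u₂ 0)⁻¹)))
          = (ζ ^ 2) • (u₂ x * (u₂ 0)⁻¹)) ∧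
      u₂ 0 * (u₂ 0)⁻¹ = 1 ∧ -(ζ • (u₁ 0 * (u₂ 0)⁻¹)) = -(ζ • (u₂ 0)⁻¹)) ∧
    -- (iii) M̂₁ = −z M̂₂⁻¹
    ζ • u₂ 0 = -((ζ ^ 2) • (-(ζ • (u₂ 0)⁻¹))⁻¹) := by
  have hζ0 : ζ ≠ 0 := fun h => hζ (by simp [h])
  have hdet : IsUnit (u₂ 0).det := (Matrix.isUnit_iff_isUnit_det _).mp hM
  set M := u₂ 0 with hMdef
  refine ⟨⟨heq₂, locAC_smul ζ h₂, ?_, h10, rfl⟩,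
    ⟨locAC_mulRight M⁻¹ h₂, ?_, ?_, ?_, Matrix.mul_nonsing_inv _ hdet, by rw [h10, one_mul]⟩, ?_⟩
  · filter_upwards [heq₁] with x hx
    calc -(ζ • u₂' x) + φ x * (ζ • u₂ x) = ζ • (-u₂' x + φ x * u₂ x) := by
          rw [smul_add, smul_neg, mul_smul_comm]
      _ = ζ • (ζ • u₁ x) := by rw [hx]
      _ = (ζ ^ 2) • u₁ x := by rw [smul_smul, sq]
  · filter_upwards [heq₁] with x hx
    have h' : u₂' x - φ x * u₂ x = -(ζ • u₁ x) := by rw [← hx]; abel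
    calc u₂' x * M⁻¹ - φ x * (u₂ x * M⁻¹) = (u₂' x - φ x * u₂ x) * M⁻¹ := by
          rw [sub_mul, mul_assoc]
      _ = -(ζ • u₁ x) * M⁻¹ := by rw [h']
      _ = -(ζ • (u₁ x * M⁻¹)) := by rw [neg_mul, smul_mul_assoc]
  · have := locAC_smul (-ζ) (locAC_mulRight M⁻¹ h₁)
    simpa [neg_smul] using this
  · filter_upwards [heq₂] with x hx
    calc -(-(ζ • (u₁' x * M⁻¹))) - φ x * (-(ζ • (u₁ x * M⁻¹)))
        = ζ • ((u₁' x + φ x * u₁ x) * M⁻¹) := by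
          simp only [neg_neg, mul_neg, sub_neg_eq_add, add_mul, smul_add, smul_mul_assoc,
            mul_smul_comm, mul_assoc]
      _ = ζ • ((ζ • u₂ x) * M⁻¹) := by rw [hx]
      _ = (ζ ^ 2) • (u₂ x * M⁻¹) := by rw [smul_mul_assoc, smul_smul, sq]
  · have hinv : (-(ζ • M⁻¹))⁻¹ = (-ζ⁻¹) • M := by
      apply Matrix.inv_eq_right_inv
      simp only [neg_mul, smul_mul_assoc, mul_smul_comm, smul_smul, Matrix.nonsing_inv_mul _ hdet,
        mul_neg, neg_smul, neg_neg, mul_inv_cancel₀ hζ0, one_smul, smul_neg,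
        inv_mul_cancel₀ hζ0]
    rw [hinv, smul_smul]
    rw [show ζ ^ 2 * -ζ⁻¹ = -ζ by field_simp]
    rw [neg_smul, neg_neg]
end

section
/- Let m ∈ ℕ and let γ = (γ₁ γ₂) ∈ ℂ^{m×2m} with m×m blocks γ₁, γ₂ satisfy γ𝔖₃γ* = −I_m, i.e., γ₁γ₁* − γ₂γ₂* = −I_m. Then γ₂ is invertible, and X := γ₂^{−1}γ₁ satisfies I_m − XX* = (γ₂*γ₂)^{−1}; in particular, I_m − XX* is positive definite. Moreover, with H := γ*γ ∈ ℂ^{2m×2m} written in m×m blocks, X = ((0 I_m) H (0 I_m)ᵀ)^{−1} (0 I_m) H (I_m 0)ᵀ, i.e., γ₂^{−1}γ₁ = (γ₂*γ₂)^{−1}(γ₂*γ₁). (This is the formula by which γ₂^{−1}γ₁ is recovered from the Hamiltonian H = γ*γ in the reconstruction procedure.) -/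
open Matrix
open scoped ComplexOrder

/-- if `γ = (γ₁ γ₂)` satisfies `γ𝔖₃γ* = −I_m`, i.e.
`γ₁γ₁* − γ₂γ₂* = −I_m`, then `γ₂` is invertible, `X := γ₂⁻¹γ₁` satisfies
`I − XX* = (γ₂*γ₂)⁻¹` (positive definite), and `X` is recovered from the
Hamiltonian `H = γ*γ` via `X = ((0 I)H(0 I)ᵀ)⁻¹ (0 I)H(I 0)ᵀ = (γ₂*γ₂)⁻¹(γ₂*γ₁)`. -/
theorem statement17 (m : ℕ) (γ₁ γ₂ : Matrix (Fin m) (Fin m) ℂ)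
    (h : γ₁ * γ₁ᴴ - γ₂ * γ₂ᴴ = -1) :
    IsUnit γ₂ ∧
    1 - (γ₂⁻¹ * γ₁) * (γ₂⁻¹ * γ₁)ᴴ = (γ₂ᴴ * γ₂)⁻¹ ∧
    (1 - (γ₂⁻¹ * γ₁) * (γ₂⁻¹ * γ₁)ᴴ).PosDef ∧
    γ₂⁻¹ * γ₁ =
      (((fromCols γ₁ γ₂)ᴴ * fromCols γ₁ γ₂).submatrix Sum.inr Sum.inr)⁻¹ *
        ((fromCols γ₁ γ₂)ᴴ * fromCols γ₁ γ₂).submatrix Sum.inr Sum.inl ∧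
    γ₂⁻¹ * γ₁ = (γ₂ᴴ * γ₂)⁻¹ * (γ₂ᴴ * γ₁) := by
  have hkey : γ₂ * γ₂ᴴ = 1 + γ₁ * γ₁ᴴ := by
    have h' := h
    rw [sub_eq_neg_add] at h'
    have : γ₂ * γ₂ᴴ = γ₁ * γ₁ᴴ - (γ₁ * γ₁ᴴ - γ₂ * γ₂ᴴ) := by abel
    rw [this, h]
    abel
  have hpd : (γ₂ * γ₂ᴴ).PosDef := by
    rw [hkey]
    exact Matrix.PosDef.add_posSemidef Matrix.PosDef.one
      (Matrix.posSemidef_self_mul_conjTranspose γ₁)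
  -- γ₂ is a unit
  have hdet : IsUnit γ₂.det := by
    have h2 : IsUnit (γ₂ * γ₂ᴴ).det := hpd.isUnit.map detMonoidHom
    rw [Matrix.det_mul] at h2
    exact isUnit_of_mul_isUnit_left h2
  have hu : IsUnit γ₂ := (Matrix.isUnit_iff_isUnit_det γ₂).mpr hdet
  have hdetH : IsUnit γ₂ᴴ.det := by simpa using hdet.star
  have hγ₂ : γ₂ * γ₂⁻¹ = 1 := Matrix.mul_nonsing_inv γ₂ hdet
  have hγ₂' : γ₂⁻¹ * γ₂ = 1 := Matrix.nonsing_inv_mul γ₂ hdet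
  have hγ₂H : γ₂ᴴ * γ₂ᴴ⁻¹ = 1 := Matrix.mul_nonsing_inv γ₂ᴴ hdetH
  have hγ₂H' : γ₂ᴴ⁻¹ * γ₂ᴴ = 1 := Matrix.nonsing_inv_mul γ₂ᴴ hdetH
  have hinvHH : (γ₂⁻¹)ᴴ = (γ₂ᴴ)⁻¹ := γ₂.conjTranspose_nonsing_inv
  have hdetHmul : IsUnit (γ₂ᴴ * γ₂).det := by
    rw [Matrix.det_mul]; exact hdetH.mul hdet
  have hHmul : (γ₂ᴴ * γ₂)⁻¹ * (γ₂ᴴ * γ₂) = 1 := Matrix.nonsing_inv_mul _ hdetHmul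
  -- second claim
  have h2 : 1 - (γ₂⁻¹ * γ₁) * (γ₂⁻¹ * γ₁)ᴴ = (γ₂ᴴ * γ₂)⁻¹ := by
    rw [Matrix.mul_inv_rev, ← hinvHH]
    have hgg : γ₁ * γ₁ᴴ = γ₂ * γ₂ᴴ - 1 := by rw [hkey]; abel
    calc 1 - (γ₂⁻¹ * γ₁) * (γ₂⁻¹ * γ₁)ᴴ
        = 1 - γ₂⁻¹ * (γ₁ * γ₁ᴴ) * γ₂⁻¹ᴴ := by
          rw [Matrix.conjTranspose_mul, Matrix.mul_assoc, Matrix.mul_assoc,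
            Matrix.mul_assoc]
      _ = 1 - γ₂⁻¹ * (γ₂ * γ₂ᴴ - 1) * γ₂⁻¹ᴴ := by rw [hgg]
      _ = γ₂⁻¹ * γ₂⁻¹ᴴ := by
          rw [Matrix.mul_sub, Matrix.sub_mul, Matrix.mul_one,
            ← Matrix.mul_assoc, hγ₂', Matrix.one_mul, hinvHH, hγ₂H]
          abel
  -- posdef of γ₂ᴴγ₂
  have hps := Matrix.posSemidef_conjTranspose_mul_self γ₂
  have hpd2 : (γ₂ᴴ * γ₂).PosDef := by
    refine Matrix.PosDef.of_dotProduct_mulVec_pos hps.1 fun x hx =>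
      lt_of_le_of_ne (hps.dotProduct_mulVec_nonneg x) fun h0 => hx ?_
    have hz : (γ₂ᴴ * γ₂) *ᵥ x = 0 := (hps.dotProduct_mulVec_zero_iff x).mp h0.symm
    calc x = ((γ₂ᴴ * γ₂)⁻¹ * (γ₂ᴴ * γ₂)) *ᵥ x := by rw [hHmul, Matrix.one_mulVec]
      _ = (γ₂ᴴ * γ₂)⁻¹ *ᵥ ((γ₂ᴴ * γ₂) *ᵥ x) := by rw [Matrix.mulVec_mulVec]
      _ = 0 := by rw [hz, Matrix.mulVec_zero]
  refine ⟨hu, h2, ?_, ?_, ?_⟩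
  · rw [h2]
    exact hpd2.inv
  · rw [conjTranspose_fromCols_eq_fromRows_conjTranspose, fromRows_mul_fromCols]
    have e1 : (fromBlocks (γ₁ᴴ * γ₁) (γ₁ᴴ * γ₂) (γ₂ᴴ * γ₁) (γ₂ᴴ * γ₂)).submatrix
        (Sum.inr : Fin m → Fin m ⊕ Fin m) Sum.inr = γ₂ᴴ * γ₂ := rfl
    have e2 : (fromBlocks (γ₁ᴴ * γ₁) (γ₁ᴴ * γ₂) (γ₂ᴴ * γ₁) (γ₂ᴴ * γ₂)).submatrix
        (Sum.inr : Fin m → Fin m ⊕ Fin m) Sum.inl = γ₂ᴴ * γ₁ := rfl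
    rw [e1, e2, Matrix.mul_inv_rev, Matrix.mul_assoc, ← Matrix.mul_assoc (γ₂ᴴ)⁻¹,
      hγ₂H', Matrix.one_mul]
  · rw [Matrix.mul_inv_rev, Matrix.mul_assoc, ← Matrix.mul_assoc (γ₂ᴴ)⁻¹,
      hγ₂H', Matrix.one_mul]
end

section
/- Let m ∈ ℕ and let β = (β₁ β₂), γ = (γ₁ γ₂) ∈ ℂ^{m×2m} (m×m blocks) satisfy β𝔖₃β* = I_m, γ𝔖₃γ* = −I_m, and β𝔖₃γ* = 0. Then γ₂ is invertible, β₂ = β₁ γ₁* (γ₂*)^{−1}, β₁ is invertible, and with β̆ := (I_m γ₁*(γ₂*)^{−1}) ∈ ℂ^{m×2m} one has β = β₁ β̆ and β̆𝔖₃β̆* = I_m − γ₁*(γ₂γ₂*)^{−1}γ₁ is positive definite (in particular invertible). (These facts justify the recovery of β from γ via β = β₁β̆ and the differential equation β₁′ = −β₁[β̆′𝔖₃β̆*][β̆𝔖₃β̆*]^{−1} in the reconstruction procedure.) -/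
open Matrix
open scoped ComplexOrder

/-- The matrix `𝔖₃ = [[I_m, 0],[0, −I_m]]` in `m × m` blocks. -/
noncomputable def S3 (m : ℕ) : Matrix (Fin m ⊕ Fin m) (Fin m ⊕ Fin m) ℂ :=
  fromBlocks 1 0 0 (-1)

/-- if `β𝔖₃β* = I_m`, `γ𝔖₃γ* = −I_m` and `β𝔖₃γ* = 0`, then `γ₂` is
invertible, `β₂ = β₁γ₁*(γ₂*)⁻¹`, `β₁` is invertible, and with
`β̆ := (I_m  γ₁*(γ₂*)⁻¹)` one has `β = β₁β̆` and
`β̆𝔖₃β̆* = I_m − γ₁*(γ₂γ₂*)⁻¹γ₁` is positive definite. -/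
theorem statement19 (m : ℕ) (β₁ β₂ γ₁ γ₂ : Matrix (Fin m) (Fin m) ℂ)
    (hβ : fromCols β₁ β₂ * S3 m * (fromCols β₁ β₂)ᴴ = 1)
    (hγ : fromCols γ₁ γ₂ * S3 m * (fromCols γ₁ γ₂)ᴴ = -1)
    (hβγ : fromCols β₁ β₂ * S3 m * (fromCols γ₁ γ₂)ᴴ = 0) :
    IsUnit γ₂ ∧
    β₂ = β₁ * γ₁ᴴ * (γ₂ᴴ)⁻¹ ∧
    IsUnit β₁ ∧
    fromCols β₁ β₂ = β₁ * fromCols 1 (γ₁ᴴ * (γ₂ᴴ)⁻¹) ∧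
    fromCols (1 : Matrix (Fin m) (Fin m) ℂ) (γ₁ᴴ * (γ₂ᴴ)⁻¹) * S3 m *
      (fromCols (1 : Matrix (Fin m) (Fin m) ℂ) (γ₁ᴴ * (γ₂ᴴ)⁻¹))ᴴ
      = 1 - γ₁ᴴ * (γ₂ * γ₂ᴴ)⁻¹ * γ₁ ∧
    (1 - γ₁ᴴ * (γ₂ * γ₂ᴴ)⁻¹ * γ₁).PosDef := by
  have key : ∀ A B C D : Matrix (Fin m) (Fin m) ℂ,
      fromCols A B * S3 m * (fromCols C D)ᴴ = A * Cᴴ - B * Dᴴ := by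
    intro A B C D
    rw [S3, fromCols_mul_fromBlocks,
      conjTranspose_fromCols_eq_fromRows_conjTranspose, fromCols_mul_fromRows]
    simp [sub_eq_add_neg]
  rw [key] at hβ hγ hβγ
  -- γ₂ γ₂ᴴ = 1 + γ₁ γ₁ᴴ is positive definite
  have hP : γ₂ * γ₂ᴴ = 1 + γ₁ * γ₁ᴴ := by
    have := sub_eq_iff_eq_add.mp hγ
    linear_combination (norm := noncomm_ring) -this
  have hPpd : (γ₂ * γ₂ᴴ).PosDef := by
    rw [hP]
    exact Matrix.PosDef.add_posSemidef Matrix.PosDef.one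
      (posSemidef_self_mul_conjTranspose γ₁)
  have hPdet : IsUnit (γ₂ * γ₂ᴴ).det := (Matrix.isUnit_iff_isUnit_det _).mp hPpd.isUnit
  have hγ₂ : IsUnit γ₂ := by
    have := hPdet
    rw [Matrix.det_mul] at this
    exact (Matrix.isUnit_iff_isUnit_det _).mpr (isUnit_of_mul_isUnit_left this)
  have hg2t : IsUnit γ₂ᴴ := by
    rwa [Matrix.isUnit_iff_isUnit_det, Matrix.det_conjTranspose, isUnit_star,
      ← Matrix.isUnit_iff_isUnit_det]
  have hg2tdet : IsUnit γ₂ᴴ.det := (Matrix.isUnit_iff_isUnit_det _).mp hg2t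
  have hγmul : γ₂ᴴ * (γ₂ᴴ)⁻¹ = 1 := Matrix.mul_nonsing_inv _ hg2tdet
  have hβ₂ : β₂ = β₁ * γ₁ᴴ * (γ₂ᴴ)⁻¹ := by
    have h1 : β₂ * γ₂ᴴ = β₁ * γ₁ᴴ := (sub_eq_zero.mp hβγ).symm
    calc β₂ = β₂ * (γ₂ᴴ * (γ₂ᴴ)⁻¹) := by rw [hγmul, Matrix.mul_one]
    _ = β₁ * γ₁ᴴ * (γ₂ᴴ)⁻¹ := by rw [← Matrix.mul_assoc, h1]
  set X : Matrix (Fin m) (Fin m) ℂ := γ₁ᴴ * (γ₂ᴴ)⁻¹ with hX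
  -- X Xᴴ = γ₁ᴴ (γ₂ γ₂ᴴ)⁻¹ γ₁
  have hXX : X * Xᴴ = γ₁ᴴ * (γ₂ * γ₂ᴴ)⁻¹ * γ₁ := by
    rw [hX]
    simp only [Matrix.mul_inv_rev, Matrix.conjTranspose_mul,
      Matrix.conjTranspose_nonsing_inv, Matrix.conjTranspose_conjTranspose]
    noncomm_ring
  -- the key matrix M
  set M : Matrix (Fin m) (Fin m) ℂ := 1 - γ₁ᴴ * (γ₂ * γ₂ᴴ)⁻¹ * γ₁ with hM
  have hQpd : (1 + γ₁ᴴ * γ₁).PosDef :=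
    Matrix.PosDef.add_posSemidef Matrix.PosDef.one (posSemidef_conjTranspose_mul_self γ₁)
  have hMQ : M * (1 + γ₁ᴴ * γ₁) = 1 := by
    have hPinv : (γ₂ * γ₂ᴴ)⁻¹ * (γ₂ * γ₂ᴴ) = 1 := Matrix.nonsing_inv_mul _ hPdet
    have h4 : γ₁ᴴ * ((γ₂ * γ₂ᴴ)⁻¹ * (1 + γ₁ * γ₁ᴴ)) * γ₁ = γ₁ᴴ * γ₁ := by
      rw [← hP, hPinv, Matrix.mul_one]
    calc M * (1 + γ₁ᴴ * γ₁)
        = 1 + γ₁ᴴ * γ₁ - γ₁ᴴ * ((γ₂ * γ₂ᴴ)⁻¹ * (1 + γ₁ * γ₁ᴴ)) * γ₁ := by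
          rw [hM]; noncomm_ring
      _ = 1 := by rw [h4]; noncomm_ring
  have hMeq : M = (1 + γ₁ᴴ * γ₁)⁻¹ :=
    (Matrix.inv_eq_right_inv (mul_eq_one_comm.mp hMQ)).symm
  have hMpd : M.PosDef := hMeq ▸ hQpd.inv
  -- β = β₁ β̆
  have hβfact : fromCols β₁ β₂ = β₁ * fromCols 1 X := by
    rw [Matrix.mul_fromCols, Matrix.mul_one, hβ₂, hX, Matrix.mul_assoc]
  -- β̆ S3 β̆ᴴ = M
  have hbr : fromCols (1 : Matrix (Fin m) (Fin m) ℂ) X * S3 m *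
      (fromCols (1 : Matrix (Fin m) (Fin m) ℂ) X)ᴴ = M := by
    rw [key, Matrix.conjTranspose_one, Matrix.mul_one, hXX]
  -- β₁ M β₁ᴴ = 1, so β₁ is invertible
  have h2 : β₂ * β₂ᴴ = β₁ * (γ₁ᴴ * (γ₂ * γ₂ᴴ)⁻¹ * γ₁) * β₁ᴴ := by
    rw [hβ₂]
    simp only [Matrix.conjTranspose_mul, Matrix.conjTranspose_nonsing_inv,
      Matrix.conjTranspose_conjTranspose, Matrix.mul_inv_rev]
    noncomm_ring
  have hβ₁M : β₁ * (M * β₁ᴴ) = 1 := by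
    have h3 : β₁ * M * β₁ᴴ = 1 := by
      calc β₁ * M * β₁ᴴ
          = β₁ * β₁ᴴ - β₁ * (γ₁ᴴ * (γ₂ * γ₂ᴴ)⁻¹ * γ₁) * β₁ᴴ := by rw [hM]; noncomm_ring
        _ = β₁ * β₁ᴴ - β₂ * β₂ᴴ := by rw [← h2]
        _ = 1 := hβ
    rw [← Matrix.mul_assoc]; exact h3
  have hβ₁ : IsUnit β₁ := by
    have := invertibleOfRightInverse β₁ (M * β₁ᴴ) hβ₁M
    exact isUnit_of_invertible β₁
  exact ⟨hγ₂, hβ₂, hβ₁, hβfact, hbr, hMpd⟩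
end
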